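/- Let λ_1,…,λ_d be distinct real numbers, ℓ ∈ {1,…,d}, and (α_{s,k}), s, k ∈ {1,…,d}∖{ℓ}, a matrix with all entries positive and maximal rank d−1. For r ∈ [0,1], x = (x_k)_{k≠ℓ} with x_k ≥ 0 and Σ_{k≠ℓ} x_k = 1, define ϖ(r,x) = (1−r)λ_ℓ + r·Σ_{k≠ℓ} λ_k x_k and χ(r,x) = [Σ_{s≠ℓ} (Σ_{k≠ℓ} α_{s,k}(λ_k − ϖ(r,x))x_k / Σ_{k≠ℓ} α_{s,k}x_k)² · √(Σ_{k≠ℓ} α_{s,k}x_k)] / [Σ_{s≠ℓ} √(Σ_{k≠ℓ} α_{s,k}x_k)]. Then for every p ∈ (0,1) there exists θ_p > 0 such that χ(r,x) ≥ θ_p for all (r,x) in the domain satisfying r·x_j ≤ p for every j ≠ ℓ. -/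
import Mathlib

open Finset

set_option maxHeartbeats 1000000

theorem stmt16 {d : ℕ} (lam : Fin d → ℝ) (hdist : Function.Injective lam)
    (ℓ : Fin d)
    (α : {s : Fin d // s ≠ ℓ} → {k : Fin d // k ≠ ℓ} → ℝ)
    (hαpos : ∀ s k, 0 < α s k)
    (hrank : (Matrix.of α).rank = d - 1) :
    ∀ p ∈ Set.Ioo (0 : ℝ) 1, ∃ θ > (0 : ℝ),
      ∀ (r : ℝ) (x : {k : Fin d // k ≠ ℓ} → ℝ),
        r ∈ Set.Icc (0 : ℝ) 1 → (∀ k, 0 ≤ x k) → ∑ k, x k = 1 →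
        (∀ j : {k : Fin d // k ≠ ℓ}, r * x j ≤ p) →
        θ ≤ (∑ s : {s : Fin d // s ≠ ℓ},
              ((∑ k, α s k * (lam k.1 - ((1 - r) * lam ℓ + r * ∑ k', lam k'.1 * x k')) * x k)
                  / (∑ k, α s k * x k)) ^ 2
                * Real.sqrt (∑ k, α s k * x k))
            / (∑ s : {s : Fin d // s ≠ ℓ}, Real.sqrt (∑ k, α s k * x k)) := by
  intro p hp
  let ι := {k : Fin d // k ≠ ℓ}
  by_cases hne : Nonempty ι
  swap
  · refine ⟨1, one_pos, ?_⟩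
    intro r x _ _ hsum _
    rw [not_nonempty_iff] at hne
    simp at hsum
  -- main case
  -- the function
  set f : ℝ × (ι → ℝ) → ℝ := fun z =>
    (∑ s : ι,
        ((∑ k, α s k * (lam k.1 - ((1 - z.1) * lam ℓ + z.1 * ∑ k', lam k'.1 * z.2 k')) * z.2 k)
            / (∑ k, α s k * z.2 k)) ^ 2
          * Real.sqrt (∑ k, α s k * z.2 k))
      / (∑ s : ι, Real.sqrt (∑ k, α s k * z.2 k)) with hf
  set K : Set (ℝ × (ι → ℝ)) := {z | z.1 ∈ Set.Icc (0:ℝ) 1 ∧ (∀ k, 0 ≤ z.2 k) ∧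
      (∑ k, z.2 k) = 1 ∧ ∀ j : ι, z.1 * z.2 j ≤ p} with hKdef
  -- positivity of the weighted sums on K
  have hSpos : ∀ z ∈ K, ∀ s : ι, 0 < ∑ k, α s k * z.2 k := by
    rintro z ⟨_, hx0, hx1, _⟩ s
    obtain ⟨k0, hk0⟩ : ∃ k, 0 < z.2 k := by
      by_contra h
      push_neg at h
      have : ∀ k : ι, z.2 k = 0 := fun k => le_antisymm (h k) (hx0 k)
      simp [this] at hx1
    have h1 : α s k0 * z.2 k0 ≤ ∑ k, α s k * z.2 k :=
      Finset.single_le_sum (f := fun k => α s k * z.2 k)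
        (fun k _ => mul_nonneg (hαpos s k).le (hx0 k)) (Finset.mem_univ k0)
    exact lt_of_lt_of_le (mul_pos (hαpos s k0) hk0) h1
  have hcardι : Fintype.card ι = d - 1 := by
    simp [ι, Fintype.card_subtype_compl, Fintype.card_subtype_eq]
  -- positivity of f on K
  have hfpos : ∀ z ∈ K, 0 < f z := by
    intro z hz
    obtain ⟨hr, hx0, hx1, hrx⟩ := hz
    have hden : 0 < ∑ s : ι, Real.sqrt (∑ k, α s k * z.2 k) := by
      apply Finset.sum_pos
      · exact fun s _ => Real.sqrt_pos.mpr (hSpos z ⟨hr, hx0, hx1, hrx⟩ s)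
      · exact Finset.univ_nonempty
    apply div_pos ?_ hden
    set ϖ : ℝ := (1 - z.1) * lam ℓ + z.1 * ∑ k', lam k'.1 * z.2 k' with hϖ
    have hterm : ∀ s : ι, 0 ≤ ((∑ k, α s k * (lam k.1 - ϖ) * z.2 k) / (∑ k, α s k * z.2 k)) ^ 2
        * Real.sqrt (∑ k, α s k * z.2 k) :=
      fun s => mul_nonneg (sq_nonneg _) (Real.sqrt_nonneg _)
    rcases (Finset.sum_nonneg fun s _ => hterm s).lt_or_eq with h | h
    · exact h
    exfalso
    -- all terms vanish
    have hzero : ∀ s : ι, (∑ k, α s k * (lam k.1 - ϖ) * z.2 k) = 0 := by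
      intro s
      have := (Finset.sum_eq_zero_iff_of_nonneg (fun s _ => hterm s)).mp h.symm s
        (Finset.mem_univ s)
      have hs := hSpos z ⟨hr, hx0, hx1, hrx⟩ s
      have hsq : ((∑ k, α s k * (lam k.1 - ϖ) * z.2 k) / (∑ k, α s k * z.2 k)) ^ 2 = 0 := by
        rcases mul_eq_zero.mp this with h' | h'
        · exact h'
        · exact absurd h' (Real.sqrt_pos.mpr hs).ne'
      have := pow_eq_zero_iff (n := 2) (by norm_num) |>.mp hsq
      rcases div_eq_zero_iff.mp this with h' | h'
      · exact h'
      · exact absurd h' hs.ne'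
    -- injectivity of the matrix
    haveI : DecidableEq ι := inferInstance
    have hinj : Function.Injective (Matrix.of α).mulVecLin := by
      have hfr : Module.finrank ℝ (LinearMap.range (Matrix.of α).mulVecLin) = Module.finrank ℝ (ι → ℝ) := by
        rw [← Matrix.rank, hrank, Module.finrank_pi, hcardι]
      have htop : LinearMap.range (Matrix.of α).mulVecLin = ⊤ :=
        Submodule.eq_top_of_finrank_eq hfr
      exact LinearMap.injective_iff_surjective.mpr (LinearMap.range_eq_top.mp htop)
    have hv : (fun k : ι => (lam k.1 - ϖ) * z.2 k) = 0 := by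
      apply hinj
      rw [map_zero]
      ext s
      simp only [Matrix.mulVecLin_apply, Matrix.mulVec, dotProduct, Matrix.of_apply]
      simp only [Pi.zero_apply]
      rw [← hzero s]
      exact Finset.sum_congr rfl fun k _ => by ring
    have hvk : ∀ k : ι, (lam k.1 - ϖ) * z.2 k = 0 := fun k => congrFun hv k
    -- find the support point
    obtain ⟨k0, hk0⟩ : ∃ k, 0 < z.2 k := by
      by_contra h'
      push_neg at h'
      have : ∀ k : ι, z.2 k = 0 := fun k => le_antisymm (h' k) (hx0 k)
      simp [this] at hx1
    have hk0lam : lam k0.1 = ϖ := by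
      rcases mul_eq_zero.mp (hvk k0) with h' | h'
      · linarith
      · exact absurd h' hk0.ne'
    have hxother : ∀ k : ι, k ≠ k0 → z.2 k = 0 := by
      intro k hk
      by_contra h'
      rcases mul_eq_zero.mp (hvk k) with h'' | h''
      · have : lam k.1 = lam k0.1 := by linarith [hk0lam]
        exact hk (Subtype.ext (hdist this))
      · exact h' h''
    have hxk0 : z.2 k0 = 1 := by
      rw [← hx1]
      exact (Finset.sum_eq_single k0 (fun k _ hk => hxother k hk) (by simp)).symm
    have hsumlam : (∑ k' : ι, lam k'.1 * z.2 k') = lam k0.1 := by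
      rw [Finset.sum_eq_single k0 (fun k _ hk => by rw [hxother k hk, mul_zero]) (by simp),
        hxk0, mul_one]
    have hr1 : z.1 = 1 := by
      rw [hϖ, hsumlam] at hk0lam
      have hne' : lam k0.1 ≠ lam ℓ := fun h => k0.2 (hdist h)
      have : (1 - z.1) * (lam k0.1 - lam ℓ) = 0 := by linarith
      rcases mul_eq_zero.mp this with h' | h'
      · linarith
      · exact absurd (by linarith : lam k0.1 = lam ℓ) hne'
    have := hrx k0
    rw [hr1, hxk0, mul_one] at this
    exact absurd (lt_of_le_of_lt this hp.2) (lt_irrefl 1)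
  -- continuity
  have hScont : ∀ s : ι, Continuous fun z : ℝ × (ι → ℝ) => ∑ k, α s k * z.2 k := by
    intro s; fun_prop
  have hcont : ContinuousOn f K := by
    apply ContinuousOn.div
    · apply continuousOn_finset_sum
      intro s _
      apply ContinuousOn.mul
      · apply ContinuousOn.pow
        apply ContinuousOn.div
        · apply Continuous.continuousOn; fun_prop
        · exact (hScont s).continuousOn
        · exact fun z hz => (hSpos z hz s).ne'
      · exact (Real.continuous_sqrt.comp (hScont s)).continuousOn
    · apply Continuous.continuousOn
      apply continuous_finset_sum
      exact fun s _ => Real.continuous_sqrt.comp (hScont s)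
    · intro z hz
      refine (Finset.sum_pos (fun s _ => Real.sqrt_pos.mpr (hSpos z hz s))
        Finset.univ_nonempty).ne'
  -- compactness
  have hKclosed : IsClosed K := by
    have e : K = ({z : ℝ × (ι → ℝ) | z.1 ∈ Set.Icc (0:ℝ) 1} ∩ (⋂ k : ι, {z | 0 ≤ z.2 k})
        ∩ {z | (∑ k, z.2 k) = 1} ∩ ⋂ j : ι, {z | z.1 * z.2 j ≤ p}) := by
      ext z
      simp only [hKdef, Set.mem_setOf_eq, Set.mem_inter_iff, Set.mem_iInter]
      tauto
    rw [e]
    have h1 : IsClosed {z : ℝ × (ι → ℝ) | z.1 ∈ Set.Icc (0:ℝ) 1} :=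
      isClosed_Icc.preimage continuous_fst
    have h2 : IsClosed (⋂ k : ι, {z : ℝ × (ι → ℝ) | 0 ≤ z.2 k}) :=
      isClosed_iInter fun k => isClosed_le continuous_const
        ((continuous_apply k).comp continuous_snd)
    have h3 : IsClosed {z : ℝ × (ι → ℝ) | (∑ k, z.2 k) = 1} :=
      isClosed_eq (continuous_finset_sum _ fun k _ => (continuous_apply k).comp continuous_snd)
        continuous_const
    have h4 : IsClosed (⋂ j : ι, {z : ℝ × (ι → ℝ) | z.1 * z.2 j ≤ p}) :=
      isClosed_iInter fun j => isClosed_le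
        (continuous_fst.mul ((continuous_apply j).comp continuous_snd)) continuous_const
    exact ((h1.inter h2).inter h3).inter h4
  have hKsub : K ⊆ Set.Icc ((0:ℝ), (0 : ι → ℝ)) (1, 1) := by
    rintro z ⟨hr, hx0, hx1, _⟩
    constructor
    · exact ⟨hr.1, fun k => hx0 k⟩
    · refine ⟨hr.2, fun k => ?_⟩
      calc z.2 k ≤ ∑ k', z.2 k' :=
            Finset.single_le_sum (fun k' _ => hx0 k') (Finset.mem_univ k)
        _ = 1 := hx1
  have hKcpt : IsCompact K := (isCompact_Icc).of_isClosed_subset hKclosed hKsub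
  have hKne : K.Nonempty := by
    refine ⟨(0, fun _ => (Fintype.card ι : ℝ)⁻¹), ?_, ?_, ?_, ?_⟩
    · exact ⟨le_refl 0, zero_le_one⟩
    · intro k
      positivity
    · rw [Finset.sum_const, Finset.card_univ, nsmul_eq_mul]
      rw [mul_inv_cancel₀]
      exact_mod_cast Fintype.card_pos.ne'
    · intro j
      simp [hp.1.le]
  obtain ⟨z0, hz0K, hz0min⟩ := hKcpt.exists_isMinOn hKne hcont
  refine ⟨f z0, hfpos z0 hz0K, ?_⟩
  intro r x hr hx0 hx1 hrx
  have hmem : ((r, x) : ℝ × (ι → ℝ)) ∈ K := ⟨hr, hx0, hx1, hrx⟩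
  have hle : f z0 ≤ f (r, x) := hz0min hmem
  simpa only [hf] using hle
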